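/- For every real t ≥ 2, the root m(t) := (4t/3)·cos((1/3)·arccos(1 − 27/(4t) + 27/(4t²))) − t/3 + 1 of the cubic x³ + (t−3)x² + (3−2t−t²)x + (−t³+5t²−3t−1) = 0 satisfies t < m(t) ≤ t + 1. -/

import Mathlib

/-- For `t ≥ 2`, the value
`m(t) = (4t/3)·cos((1/3)·arccos(1 − 27/(4t) + 27/(4t²))) − t/3 + 1` is a root of the
cubic `x³ + (t−3)x² + (3−2t−t²)x + (−t³+5t²−3t−1)` and satisfies `t < m(t) ≤ t + 1`. -/
theorem cubic_main_root_bounds (t : ℝ) (ht : 2 ≤ t) :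
    let m := 4 * t / 3 *
        Real.cos (1 / 3 * Real.arccos (1 - 27 / (4 * t) + 27 / (4 * t ^ 2))) - t / 3 + 1
    m ^ 3 + (t - 3) * m ^ 2 + (3 - 2 * t - t ^ 2) * m + (-t ^ 3 + 5 * t ^ 2 - 3 * t - 1) = 0 ∧
    t < m ∧ m ≤ t + 1 := by
  intro m
  have ht0 : (0:ℝ) < t := by linarith
  set z : ℝ := 1 - 27 / (4 * t) + 27 / (4 * t ^ 2) with hzdef
  have hz1 : z ≤ 1 := by
    rw [hzdef]
    have h1 : 27 / (4 * t ^ 2) ≤ 27 / (4 * t) := by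
      apply div_le_div_of_nonneg_left (by norm_num) (by positivity)
      nlinarith
    linarith
  have hz2 : -1 ≤ z := by
    rw [hzdef]
    have he : 1 - 27 / (4 * t) + 27 / (4 * t ^ 2) + 1
        = (8 * t ^ 2 - 27 * t + 27) / (4 * t ^ 2) := by
      field_simp; ring
    have hpos : (0:ℝ) ≤ (8 * t ^ 2 - 27 * t + 27) / (4 * t ^ 2) := by
      apply div_nonneg _ (by positivity)
      nlinarith [sq_nonneg (4 * t - 27 / 4)]
    linarith [he, hpos]
  set c : ℝ := Real.cos (1 / 3 * Real.arccos z) with hcdef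
  have hm : m = 4 * t / 3 * c - t / 3 + 1 := rfl
  have hkey : 4 * c ^ 3 - 3 * c = z := by
    have h3 : (3:ℝ) * (1 / 3 * Real.arccos z) = Real.arccos z := by ring
    have := Real.cos_three_mul (1 / 3 * Real.arccos z)
    rw [h3, Real.cos_arccos hz2 hz1] at this
    rw [hcdef]; linarith
  have key2 : 4 * t ^ 2 * (4 * c ^ 3 - 3 * c) = 4 * t ^ 2 - 27 * t + 27 := by
    rw [hkey, hzdef]; field_simp
  have hc1 : c ≤ 1 := Real.cos_le_one _
  have hchalf : 1 / 2 ≤ c := by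
    rw [hcdef]
    have h1 : Real.cos (Real.pi / 3) ≤ Real.cos (1 / 3 * Real.arccos z) := by
      apply Real.cos_le_cos_of_nonneg_of_le_pi
      · have := Real.arccos_nonneg z
        linarith
      · linarith [Real.pi_pos]
      · have := Real.arccos_le_pi z
        linarith
    rwa [Real.cos_pi_div_three] at h1
  refine ⟨?_, ?_, ?_⟩
  · rw [hm]
    linear_combination (4 * t / 27) * key2
  · rw [hm]
    by_contra h
    push_neg at h
    have hX : 4 * t * c ≤ 4 * t - 3 := by nlinarith [h]
    have h2t : 2 * t ≤ 4 * t * c := by nlinarith [hchalf, ht0]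
    have key3 : (4 * t * c) ^ 3 - 12 * t ^ 2 * (4 * t * c) =
        16 * t ^ 3 - 108 * t ^ 2 + 108 * t := by linear_combination 4 * t * key2
    have hfac : (4 * t * c - (4 * t - 3)) *
        ((4 * t * c) ^ 2 + (4 * t * c) * (4 * t - 3) + (4 * t - 3) ^ 2 - 12 * t ^ 2) = 27 := by
      linear_combination key3
    have hU : 2 * t ≤ 4 * t - 3 := by linarith
    have hb : 0 ≤ (4 * t * c) ^ 2 + (4 * t * c) * (4 * t - 3) + (4 * t - 3) ^ 2 - 12 * t ^ 2 := by
      nlinarith [mul_nonneg (sub_nonneg.2 h2t) (sub_nonneg.2 h2t),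
        mul_nonneg (sub_nonneg.2 h2t) (sub_nonneg.2 hU),
        mul_nonneg (sub_nonneg.2 hU) (sub_nonneg.2 hU), ht0]
    nlinarith [mul_nonpos_of_nonpos_of_nonneg (by linarith : 4 * t * c - (4 * t - 3) ≤ 0) hb]
  · rw [hm]
    nlinarith [hc1, ht0]
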